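/- arXiv:1110.4653 — 8 statements merged into one kernel-verified Lean document; each statement's English description precedes it below -/
import Mathlib

section
/- Let ξ₀, ξ₁ ∈ ℝ satisfy ξ₀ > −1, ξ₁ > −1 and (ξ₀+1)(ξ₁+1) > 1. Then for every λ > 0 one has ξ₀ξ₁ + (ξ₀+ξ₁)·√λ·coth(√λ) + λ ≥ (ξ₀+1)(ξ₁+1) − 1 > 0; in particular the left-hand side is strictly positive. -/
/-- The hyperbolic cotangent. -/
noncomputable def coth (s : ℝ) : ℝ := Real.cosh s / Real.sinh s

lemma aux_lower : ∀ s : ℝ, 0 ≤ s → Real.sinh s ≤ s * Real.cosh s := by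
  have hd : ∀ s : ℝ, HasDerivAt (fun s => s * Real.cosh s - Real.sinh s)
      (s * Real.sinh s) s := by
    intro s
    have h := ((hasDerivAt_id s).mul (Real.hasDerivAt_cosh s)).sub (Real.hasDerivAt_sinh s)
    refine h.congr_deriv ?_; simp [id]; try ring
  have hmono : Monotone (fun s : ℝ => s * Real.cosh s - Real.sinh s) := by
    apply monotone_of_deriv_nonneg
    · exact fun s => (hd s).differentiableAt
    · intro s
      rw [(hd s).deriv]
      rcases le_or_gt 0 s with h | h
      · exact mul_nonneg h (Real.sinh_nonneg_iff.mpr h)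
      · have : Real.sinh s ≤ 0 := Real.sinh_nonpos_iff.mpr h.le
        nlinarith
  intro s hs
  have := hmono hs
  simp at this
  linarith

lemma aux_upper : ∀ s : ℝ, 0 ≤ s →
    s * Real.cosh s ≤ (1 + s ^ 2 / 2) * Real.sinh s := by
  have hd : ∀ s : ℝ, HasDerivAt (fun s => (1 + s ^ 2 / 2) * Real.sinh s - s * Real.cosh s)
      (s ^ 2 / 2 * Real.cosh s) s := by
    intro s
    have h1 : HasDerivAt (fun s : ℝ => 1 + s ^ 2 / 2) s s := by
      have := ((hasDerivAt_pow 2 s).div_const 2).const_add 1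
      refine this.congr_deriv ?_; simp
    have h := (h1.mul (Real.hasDerivAt_sinh s)).sub
      ((hasDerivAt_id s).mul (Real.hasDerivAt_cosh s))
    refine h.congr_deriv ?_; simp [id]; try ring
  have hmono : Monotone (fun s : ℝ => (1 + s ^ 2 / 2) * Real.sinh s - s * Real.cosh s) := by
    apply monotone_of_deriv_nonneg
    · exact fun s => (hd s).differentiableAt
    · intro s
      rw [(hd s).deriv]
      positivity
  intro s hs
  have := hmono hs
  simp at this
  linarith

/-- If `ξ₀ > -1`, `ξ₁ > -1` and `(ξ₀+1)(ξ₁+1) > 1`, then for every `λ > 0` the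
eigenvalue determinant function `ξ₀ξ₁ + (ξ₀+ξ₁)·√λ·coth(√λ) + λ` is bounded below by
`(ξ₀+1)(ξ₁+1) − 1 > 0`, and in particular it is strictly positive. -/
theorem stmt0 (ξ₀ ξ₁ : ℝ) (h₀ : ξ₀ > -1) (h₁ : ξ₁ > -1)
    (hprod : (ξ₀ + 1) * (ξ₁ + 1) > 1) :
    ∀ l : ℝ, l > 0 →
      (ξ₀ + 1) * (ξ₁ + 1) - 1
          ≤ ξ₀ * ξ₁ + (ξ₀ + ξ₁) * Real.sqrt l * coth (Real.sqrt l) + l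
        ∧ (ξ₀ + 1) * (ξ₁ + 1) - 1 > 0
        ∧ 0 < ξ₀ * ξ₁ + (ξ₀ + ξ₁) * Real.sqrt l * coth (Real.sqrt l) + l := by
  intro l hl
  set s := Real.sqrt l with hs
  have hspos : 0 < s := Real.sqrt_pos.mpr hl
  have hsq : s ^ 2 = l := Real.sq_sqrt hl.le
  have hsinh : 0 < Real.sinh s := Real.sinh_pos_iff.mpr hspos
  have hct : s * coth s = s * Real.cosh s / Real.sinh s := by
    rw [coth]; ring
  have hlow : 1 ≤ s * coth s := by
    rw [hct, le_div_iff₀ hsinh, one_mul]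
    exact aux_lower s hspos.le
  have hup : s * coth s ≤ 1 + s ^ 2 / 2 := by
    rw [hct, div_le_iff₀ hsinh]
    exact aux_upper s hspos.le
  have hkey : (ξ₀ + 1) * (ξ₁ + 1) - 1
      ≤ ξ₀ * ξ₁ + (ξ₀ + ξ₁) * s * coth s + l := by
    have h2 : ξ₀ + ξ₁ > -2 := by linarith
    have hmul : (ξ₀ + ξ₁) * s * coth s = (ξ₀ + ξ₁) * (s * coth s) := by ring
    rw [hmul, ← hsq]
    nlinarith [hlow, hup, h2, sq_nonneg s]
  refine ⟨hkey, by nlinarith, by nlinarith⟩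
end

section
/- Let ξ₀, ξ₁ ∈ ℝ satisfy (ξ₀+1)(ξ₁+1) < 1. Then there exists λ > 0 such that ξ₀ξ₁ + (ξ₀+ξ₁)·√λ·coth(√λ) + λ = 0. -/
lemma tendsto_mul_coth : Filter.Tendsto (fun s : ℝ => s * coth s)
    (nhdsWithin 0 (Set.Ioi 0)) (nhds 1) := by
  have hslope : Filter.Tendsto (fun s : ℝ => Real.sinh s / s)
      (nhdsWithin 0 {(0:ℝ)}ᶜ) (nhds 1) := by
    have h := (Real.hasDerivAt_sinh 0)
    rw [hasDerivAt_iff_tendsto_slope] at h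
    simp only [Real.cosh_zero] at h
    refine h.congr' ?_
    filter_upwards [self_mem_nhdsWithin] with s hs
    simp [slope_def_field, Real.sinh_zero]
  have hinv : Filter.Tendsto (fun s : ℝ => s / Real.sinh s)
      (nhdsWithin 0 {(0:ℝ)}ᶜ) (nhds 1) := by
    have := hslope.inv₀ one_ne_zero
    simp only [inv_one] at this
    refine this.congr ?_
    intro s
    simp [inv_div]
  have hcosh : Filter.Tendsto (fun s : ℝ => Real.cosh s)
      (nhdsWithin 0 {(0:ℝ)}ᶜ) (nhds 1) := by
    simpa using (Real.continuous_cosh.tendsto 0).mono_left nhdsWithin_le_nhds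
  have hmul := hcosh.mul hinv
  rw [one_mul] at hmul
  have heq : (fun s : ℝ => s * coth s) = fun s => Real.cosh s * (s / Real.sinh s) := by
    funext s
    unfold coth
    rw [div_eq_mul_inv, div_eq_mul_inv]
    ring
  rw [heq]
  exact hmul.mono_left (nhdsWithin_mono _ (fun s hs => ne_of_gt hs))

/-- If `(ξ₀+1)(ξ₁+1) < 1`, then the eigenvalue determinant function
`f(λ) = ξ₀ξ₁ + (ξ₀+ξ₁)·√λ·coth(√λ) + λ` has a zero at some `λ > 0`. -/
theorem stmt1 (ξ₀ ξ₁ : ℝ) (hprod : (ξ₀ + 1) * (ξ₁ + 1) < 1) :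
    ∃ l : ℝ, l > 0 ∧
      ξ₀ * ξ₁ + (ξ₀ + ξ₁) * Real.sqrt l * coth (Real.sqrt l) + l = 0 := by
  set f : ℝ → ℝ := fun s => ξ₀ * ξ₁ + (ξ₀ + ξ₁) * s * coth s + s ^ 2 with hf
  -- limit at 0+ is (ξ₀+1)(ξ₁+1) - 1 < 0
  have hlim : Filter.Tendsto f (nhdsWithin 0 (Set.Ioi 0))
      (nhds (ξ₀ * ξ₁ + (ξ₀ + ξ₁) * 1 + 0 ^ 2)) := by
    have h1 : Filter.Tendsto (fun s : ℝ => (ξ₀ + ξ₁) * (s * coth s))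
        (nhdsWithin 0 (Set.Ioi 0)) (nhds ((ξ₀ + ξ₁) * 1)) :=
      (tendsto_const_nhds.mul tendsto_mul_coth)
    have h2 : Filter.Tendsto (fun s : ℝ => s ^ 2) (nhdsWithin 0 (Set.Ioi 0))
        (nhds (0 ^ 2)) :=
      ((continuous_pow 2).tendsto 0).mono_left nhdsWithin_le_nhds
    have h0 : Filter.Tendsto (fun _ : ℝ => ξ₀ * ξ₁) (nhdsWithin 0 (Set.Ioi 0))
        (nhds (ξ₀ * ξ₁)) := tendsto_const_nhds
    have := (h0.add h1).add h2
    refine this.congr fun s => ?_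
    simp [hf]; ring
  have hneg : ξ₀ * ξ₁ + (ξ₀ + ξ₁) * 1 + 0 ^ 2 < 0 := by nlinarith
  -- get a small point where f < 0
  have hev : ∀ᶠ s in nhdsWithin 0 (Set.Ioi 0), f s < 0 :=
    hlim.eventually (Filter.Tendsto.eventually_lt_const hneg Filter.tendsto_id)
  obtain ⟨a, ha0, hfa⟩ : ∃ a : ℝ, 0 < a ∧ f a < 0 := by
    rcases (hev.and self_mem_nhdsWithin).exists with ⟨a, h1, h2⟩
    exact ⟨a, h2, h1⟩
  -- a large point where f > 0
  set b : ℝ := max a (|ξ₀ * ξ₁| + |ξ₀ + ξ₁| * coth 1 + 1) + 1 with hb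
  have hcoth1 : 0 < coth 1 := by
    unfold coth
    positivity
  have hb1 : 1 ≤ b := by
    have : 0 ≤ |ξ₀ * ξ₁| + |ξ₀ + ξ₁| * coth 1 + 1 := by positivity
    have := le_max_right a (|ξ₀ * ξ₁| + |ξ₀ + ξ₁| * coth 1 + 1)
    nlinarith [le_max_right a (|ξ₀ * ξ₁| + |ξ₀ + ξ₁| * coth 1 + 1)]
  have hab : a ≤ b := by
    have := le_max_left a (|ξ₀ * ξ₁| + |ξ₀ + ξ₁| * coth 1 + 1)
    linarith
  have hbig : |ξ₀ * ξ₁| + |ξ₀ + ξ₁| * coth 1 + 1 ≤ b := by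
    have := le_max_right a (|ξ₀ * ξ₁| + |ξ₀ + ξ₁| * coth 1 + 1)
    linarith
  -- coth is decreasing-ish: for s ≥ 1, 0 < coth s ≤ coth 1
  have hcoth_le : ∀ s : ℝ, 1 ≤ s → 0 < coth s ∧ coth s ≤ coth 1 := by
    intro s hs
    have hs0 : 0 < s := lt_of_lt_of_le one_pos hs
    have hsinh : 0 < Real.sinh s := Real.sinh_pos_iff.2 hs0
    have hsinh1 : 0 < Real.sinh 1 := Real.sinh_pos_iff.2 one_pos
    constructor
    · unfold coth; positivity
    · unfold coth
      rw [div_le_div_iff₀ hsinh hsinh1]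
      -- cosh s * sinh 1 ≤ cosh 1 * sinh s  ⟺ sinh (s - 1) ≥ 0
      have : Real.sinh (s - 1) = Real.sinh s * Real.cosh 1 - Real.cosh s * Real.sinh 1 :=
        Real.sinh_sub s 1
      have h0 : 0 ≤ Real.sinh (s - 1) := Real.sinh_nonneg_iff.2 (by linarith)
      nlinarith
  have hfb : 0 < f b := by
    obtain ⟨hc0, hc1⟩ := hcoth_le b hb1
    have hb0 : 0 < b := lt_of_lt_of_le one_pos hb1
    have h1 : (ξ₀ + ξ₁) * b * coth b ≥ -(|ξ₀ + ξ₁| * coth 1 * b) := by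
      have habs : |(ξ₀ + ξ₁) * b * coth b| ≤ |ξ₀ + ξ₁| * coth 1 * b := by
        rw [abs_mul, abs_mul, abs_of_pos hb0, abs_of_pos hc0]
        have h2 : |ξ₀ + ξ₁| * b * coth b ≤ |ξ₀ + ξ₁| * b * coth 1 := by
          apply mul_le_mul_of_nonneg_left hc1 (by positivity)
        nlinarith
      linarith [neg_abs_le ((ξ₀ + ξ₁) * b * coth b)]
    have h2 : ξ₀ * ξ₁ ≥ -|ξ₀ * ξ₁| := neg_abs_le _
    have h3 : b ^ 2 ≥ (|ξ₀ * ξ₁| + |ξ₀ + ξ₁| * coth 1 + 1) * b := by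
      have : b * b ≥ (|ξ₀ * ξ₁| + |ξ₀ + ξ₁| * coth 1 + 1) * b :=
        mul_le_mul_of_nonneg_right hbig (le_of_lt hb0)
      nlinarith
    have h4 : |ξ₀ * ξ₁| * b ≥ |ξ₀ * ξ₁| := by nlinarith [abs_nonneg (ξ₀ * ξ₁)]
    simp only [hf]
    nlinarith
  -- continuity of f on [a, b]
  have hcont : ContinuousOn f (Set.Icc a b) := by
    apply ContinuousOn.add
    apply ContinuousOn.add
    · exact continuousOn_const
    · apply ContinuousOn.mul
      · exact (continuous_const.mul continuous_id).continuousOn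
      · unfold coth
        apply ContinuousOn.div Real.continuous_cosh.continuousOn
          Real.continuous_sinh.continuousOn
        intro s hs
        exact ne_of_gt (Real.sinh_pos_iff.2 (lt_of_lt_of_le ha0 hs.1))
    · exact (continuous_pow 2).continuousOn
  obtain ⟨c, hc, hfc⟩ := intermediate_value_Icc hab hcont
    (Set.mem_Icc.2 ⟨le_of_lt hfa, le_of_lt hfb⟩)
  have hc0 : 0 < c := lt_of_lt_of_le ha0 hc.1
  refine ⟨c ^ 2, by positivity, ?_⟩
  have hsq : Real.sqrt (c ^ 2) = c := Real.sqrt_sq (le_of_lt hc0)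
  rw [hsq]
  simpa [hf] using hfc
end

section
/- Let ξ₀, ξ₁ ∈ ℝ satisfy ξ₀ ≤ −1, ξ₁ ≤ −1 and (ξ₀+1)(ξ₁+1) > 1. Then there exists λ > 0 such that ξ₀ξ₁ + (ξ₀+ξ₁)·√λ·coth(√λ) + λ = 0. Moreover, at the point λ₀ with √λ₀ = −(ξ₀+ξ₁)/2 > 0 one has ξ₀ξ₁ + (ξ₀+ξ₁)·√λ₀·coth(√λ₀) + λ₀ < ξ₀ξ₁ − (ξ₀+ξ₁)²/4 = −(ξ₀−ξ₁)²/4 ≤ 0. -/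
lemma coth_gt_one {s : ℝ} (hs : 0 < s) : 1 < coth s := by
  have h1 : 0 < Real.sinh s := Real.sinh_pos_iff.2 hs
  have h2 : Real.sinh s < Real.cosh s := Real.sinh_lt_cosh s
  rw [coth, lt_div_iff₀ h1, one_mul]
  exact h2

lemma mul_coth_le {s : ℝ} (hs : 0 < s) : s * coth s ≤ 1 + s ^ 2 := by
  have h1 : 0 < Real.sinh s := Real.sinh_pos_iff.2 hs
  rw [coth, ← mul_div_assoc, div_le_iff₀ h1]
  -- s * cosh s ≤ (1 + s^2) * sinh s
  have hu : 1 + s + s ^ 2 / 2 ≤ Real.exp s := Real.quadratic_le_exp_of_nonneg hs.le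
  have hue : Real.exp s * Real.exp (-s) = 1 := by
    rw [← Real.exp_add]; simp
  have hup : 0 < Real.exp (-s) := Real.exp_pos _
  have hup' : 0 < Real.exp s := Real.exp_pos _
  rw [Real.cosh_eq, Real.sinh_eq]
  have hu2 : (1 + s + s ^ 2 / 2) ^ 2 ≤ (Real.exp s) ^ 2 := by
    apply pow_le_pow_left₀ (by positivity) hu
  have hkey : 1 + s ^ 2 + s ≤ (1 + s ^ 2 - s) * (Real.exp s) ^ 2 := by
    have hpos : (0 : ℝ) ≤ 1 + s ^ 2 - s := by nlinarith [sq_nonneg (s - 1)]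
    have := mul_le_mul_of_nonneg_left hu2 hpos
    nlinarith [pow_nonneg hs.le 3, pow_nonneg hs.le 4, pow_nonneg hs.le 5, pow_nonneg hs.le 6]
  have h4 : (1 + s ^ 2 + s) * Real.exp (-s) ≤ (1 + s ^ 2 - s) * Real.exp s := by
    have h3 := mul_le_mul_of_nonneg_right hkey hup.le
    have heq : (1 + s ^ 2 - s) * (Real.exp s) ^ 2 * Real.exp (-s)
        = (1 + s ^ 2 - s) * Real.exp s * (Real.exp s * Real.exp (-s)) := by ring
    rw [heq, hue, mul_one] at h3
    linarith
  linarith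

/-- If `ξ₀ ≤ -1`, `ξ₁ ≤ -1` and `(ξ₀+1)(ξ₁+1) > 1`, then the eigenvalue determinant
function `f(λ) = ξ₀ξ₁ + (ξ₀+ξ₁)·√λ·coth(√λ) + λ` has a zero at some `λ > 0`; moreover,
at the point `λ₀` with `√λ₀ = −(ξ₀+ξ₁)/2 > 0` one has
`f(λ₀) < ξ₀ξ₁ − (ξ₀+ξ₁)²/4 = −(ξ₀−ξ₁)²/4 ≤ 0`. -/
theorem stmt2 (ξ₀ ξ₁ : ℝ) (h₀ : ξ₀ ≤ -1) (h₁ : ξ₁ ≤ -1)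
    (hprod : (ξ₀ + 1) * (ξ₁ + 1) > 1) :
    (∃ l : ℝ, l > 0 ∧
        ξ₀ * ξ₁ + (ξ₀ + ξ₁) * Real.sqrt l * coth (Real.sqrt l) + l = 0)
    ∧ (0 < -(ξ₀ + ξ₁) / 2)
    ∧ (ξ₀ * ξ₁ + (ξ₀ + ξ₁) * Real.sqrt ((-(ξ₀ + ξ₁) / 2) ^ 2)
            * coth (Real.sqrt ((-(ξ₀ + ξ₁) / 2) ^ 2)) + (-(ξ₀ + ξ₁) / 2) ^ 2
          < ξ₀ * ξ₁ - (ξ₀ + ξ₁) ^ 2 / 4)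
    ∧ ξ₀ * ξ₁ - (ξ₀ + ξ₁) ^ 2 / 4 = -(ξ₀ - ξ₁) ^ 2 / 4
    ∧ -(ξ₀ - ξ₁) ^ 2 / 4 ≤ 0 := by
  set S : ℝ := ξ₀ + ξ₁ with hS
  have hSle : S ≤ -2 := by simp only [hS]; linarith
  have hs₀ : (0 : ℝ) < -S / 2 := by linarith
  set s₀ : ℝ := -S / 2 with hs₀def
  have hsqrt : Real.sqrt (s₀ ^ 2) = s₀ := Real.sqrt_sq hs₀.le
  set F : ℝ → ℝ := fun l => ξ₀ * ξ₁ + S * Real.sqrt l * coth (Real.sqrt l) + l with hF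
  -- F at λ₀ := s₀^2 is < ξ₀ξ₁ - S²/4
  have hcoth₀ : 1 < coth s₀ := coth_gt_one hs₀
  have hFneg : F (s₀ ^ 2) < ξ₀ * ξ₁ - S ^ 2 / 4 := by
    have : S * s₀ * coth s₀ < S * s₀ * 1 := by
      apply mul_lt_mul_of_neg_left hcoth₀
      nlinarith
    have e1 : S * s₀ = -S ^ 2 / 2 := by rw [hs₀def]; ring
    have e2 : s₀ ^ 2 = S ^ 2 / 4 := by rw [hs₀def]; ring
    simp only [hF, hsqrt]
    nlinarith [this, e1, e2]
  have hc : 0 < ξ₀ * ξ₁ + S := by nlinarith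
  set c : ℝ := ξ₀ * ξ₁ + S with hc_def
  -- choose small a
  have hS1 : 0 < -(S + 1) := by linarith
  set a : ℝ := min (s₀ ^ 2) (c / (2 * -(S + 1))) with ha_def
  have ha_pos : 0 < a := lt_min (by positivity) (by positivity)
  have ha_le : a ≤ s₀ ^ 2 := min_le_left _ _
  have ha_le2 : a * -(S + 1) ≤ c / 2 := by
    have := min_le_right (s₀ ^ 2) (c / (2 * -(S + 1)))
    rw [← ha_def] at this
    rw [← le_div_iff₀ hS1]
    calc a ≤ c / (2 * -(S + 1)) := this
    _ = c / 2 / -(S + 1) := (div_div c 2 (-(S + 1))).symm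
  have hFa : 0 < F a := by
    have hsa : 0 < Real.sqrt a := Real.sqrt_pos.2 ha_pos
    have hbound : Real.sqrt a * coth (Real.sqrt a) ≤ 1 + a := by
      have := mul_coth_le hsa
      rwa [Real.sq_sqrt ha_pos.le] at this
    have hSneg : S < 0 := by linarith
    have : S * (Real.sqrt a * coth (Real.sqrt a)) ≥ S * (1 + a) :=
      mul_le_mul_of_nonpos_left hbound hSneg.le
    simp only [hF]
    nlinarith
  -- continuity of F on [a, s₀^2]
  have hcont : ContinuousOn F (Set.Icc a (s₀ ^ 2)) := by
    have hne : ∀ x ∈ Set.Icc a (s₀ ^ 2), Real.sinh (Real.sqrt x) ≠ 0 := by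
      intro x hx
      exact ne_of_gt (Real.sinh_pos_iff.2 (Real.sqrt_pos.2 (lt_of_lt_of_le ha_pos hx.1)))
    apply ContinuousOn.add
    apply ContinuousOn.add continuousOn_const
    · exact (continuousOn_const.mul Real.continuous_sqrt.continuousOn).mul
        (((Real.continuous_cosh.comp Real.continuous_sqrt).continuousOn).div
          ((Real.continuous_sinh.comp Real.continuous_sqrt).continuousOn) hne)
    · exact continuousOn_id
  have hzero : ∃ l : ℝ, l > 0 ∧ F l = 0 := by
    have hmem : (0 : ℝ) ∈ Set.Icc (F (s₀ ^ 2)) (F a) := by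
      constructor
      · have hle0 : ξ₀ * ξ₁ - S ^ 2 / 4 ≤ 0 := by
          rw [hS]; nlinarith [sq_nonneg (ξ₀ - ξ₁)]
        exact le_trans hFneg.le hle0
      · exact hFa.le
    have := intermediate_value_Icc' ha_le hcont hmem
    obtain ⟨x, hx, hfx⟩ := this
    exact ⟨x, lt_of_lt_of_le ha_pos hx.1, hfx⟩
  refine ⟨?_, hs₀, ?_, by ring, by nlinarith [sq_nonneg (ξ₀ - ξ₁)]⟩
  · obtain ⟨l, hl, hfl⟩ := hzero
    exact ⟨l, hl, by simpa [hF] using hfl⟩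
  · simpa [hF] using hFneg
end

section
/- Let n ≥ 2 be a natural number. Define the (n−1)×(n−1) real matrices L and C, indexed by i,j ∈ {1,…,n−1}, by L_{ij} = −2n if i = j, L_{ij} = n if |i−j| = 1, L_{ij} = 0 otherwise, and C_{ij} = min(i,j)/n − ij/n². Then C·L = −Id, i.e. C = (−L)⁻¹. -/
lemma sum_ind_aux {N : ℕ} (m : ℕ) (x : ℝ) :
    ∑ j : Fin N, (if (j : ℕ) = m then x else 0) = if m < N then x else 0 := by
  rw [Fin.sum_univ_eq_sum_range (fun p => if p = m then x else 0) N]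
  rw [Finset.sum_ite_eq' (Finset.range N) m (fun _ => x)]
  simp [Finset.mem_range]

/-- The finite element stiffness matrix `L` of `∂ₓ²` with homogeneous Dirichlet boundary
conditions on the uniform grid with spacing `1/n`, and the matrix `C` of values of the
Brownian bridge covariance `min(x,y) − xy` at the grid points, satisfy `C·L = −Id`,
i.e. `C = (−L)⁻¹`.  (Rows and columns are indexed by `i, j ∈ {1, …, n−1}`, realised
here as `Fin (n-1)` via `i ↦ i+1`.) -/
theorem stmt6 (n : ℕ) (hn : 2 ≤ n)
    (L C : Matrix (Fin (n - 1)) (Fin (n - 1)) ℝ)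
    (hL : ∀ i j : Fin (n - 1),
      L i j = if (i : ℕ) = (j : ℕ) then -2 * (n : ℝ)
        else if (i : ℕ) + 1 = (j : ℕ) ∨ (j : ℕ) + 1 = (i : ℕ) then (n : ℝ)
        else 0)
    (hC : ∀ i j : Fin (n - 1),
      C i j = ((min ((i : ℕ) + 1) ((j : ℕ) + 1) : ℕ) : ℝ) / n
        - (((i : ℕ) + 1) * ((j : ℕ) + 1) : ℝ) / (n : ℝ) ^ 2) :
    C * L = -1 := by
  have hnR : (n : ℝ) ≠ 0 := Nat.cast_ne_zero.mpr (by omega)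
  ext i k
  have hiN : (i : ℕ) < n - 1 := i.isLt
  have hkN : (k : ℕ) < n - 1 := k.isLt
  set c : ℕ → ℝ := fun m =>
    ((min ((i : ℕ) + 1) m : ℕ) : ℝ) / n - (((((i : ℕ) + 1) * m : ℕ)) : ℝ) / (n : ℝ) ^ 2
    with hcdef
  have hCc : ∀ j : Fin (n - 1), C i j = c ((j : ℕ) + 1) := by
    intro j
    rw [hC]
    simp only [hcdef]
    push_cast
    ring
  have hc0 : c 0 = 0 := by
    simp [hcdef]
    left
    positivity
  have hcn : c n = 0 := by
    simp only [hcdef]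
    rw [Nat.min_eq_left (by omega)]
    push_cast
    field_simp
    ring
  have hterm : ∀ j : Fin (n - 1), C i j * L j k =
      (if (j : ℕ) = (k : ℕ) then (-2 * (n : ℝ)) * c ((k : ℕ) + 1) else 0)
      + (if (j : ℕ) + 1 = (k : ℕ) then (n : ℝ) * c (k : ℕ) else 0)
      + (if (j : ℕ) = (k : ℕ) + 1 then (n : ℝ) * c ((k : ℕ) + 2) else 0) := by
    intro j
    rw [hCc j, hL]
    by_cases h1 : (j : ℕ) = (k : ℕ)
    · rw [if_pos h1, if_pos h1, if_neg (by omega : ¬((j : ℕ) + 1 = (k : ℕ))),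
        if_neg (by omega : ¬((j : ℕ) = (k : ℕ) + 1))]
      rw [h1]; ring
    · rw [if_neg h1, if_neg h1]
      by_cases h2 : (j : ℕ) + 1 = (k : ℕ)
      · rw [if_pos (Or.inl h2), if_pos h2,
          if_neg (by omega : ¬((j : ℕ) = (k : ℕ) + 1))]
        rw [h2]; ring
      · rw [if_neg h2]
        by_cases h3 : (j : ℕ) = (k : ℕ) + 1
        · rw [if_pos (Or.inr (by omega)), if_pos h3]
          rw [h3]; ring
        · rw [if_neg (by omega : ¬((j : ℕ) + 1 = (k : ℕ) ∨ (k : ℕ) + 1 = (j : ℕ))),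
            if_neg h3]
          ring
  have hS1 : ∑ j : Fin (n - 1),
      (if (j : ℕ) = (k : ℕ) then (-2 * (n : ℝ)) * c ((k : ℕ) + 1) else 0)
      = (-2 * (n : ℝ)) * c ((k : ℕ) + 1) := by
    rw [sum_ind_aux, if_pos hkN]
  have hS2 : ∑ j : Fin (n - 1),
      (if (j : ℕ) + 1 = (k : ℕ) then (n : ℝ) * c (k : ℕ) else 0)
      = (n : ℝ) * c (k : ℕ) := by
    rcases Nat.eq_zero_or_pos (k : ℕ) with hk0 | hk0
    · rw [Finset.sum_eq_zero (fun j _ => if_neg (by omega))]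
      rw [hk0, hc0, mul_zero]
    · have heq : ∀ j : Fin (n - 1),
          (if (j : ℕ) + 1 = (k : ℕ) then (n : ℝ) * c (k : ℕ) else 0)
          = (if (j : ℕ) = (k : ℕ) - 1 then (n : ℝ) * c (k : ℕ) else 0) :=
        fun j => if_congr (by omega) rfl rfl
      rw [Finset.sum_congr rfl (fun j _ => heq j), sum_ind_aux, if_pos (by omega)]
  have hS3 : ∑ j : Fin (n - 1),
      (if (j : ℕ) = (k : ℕ) + 1 then (n : ℝ) * c ((k : ℕ) + 2) else 0)
      = (n : ℝ) * c ((k : ℕ) + 2) := by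
    rw [sum_ind_aux]
    rcases lt_or_ge ((k : ℕ) + 1) (n - 1) with h | h
    · rw [if_pos h]
    · rw [if_neg (not_lt.mpr h), show (k : ℕ) + 2 = n from by omega, hcn, mul_zero]
  have hfin : (-2 * (n : ℝ)) * c ((k : ℕ) + 1) + (n : ℝ) * c (k : ℕ)
      + (n : ℝ) * c ((k : ℕ) + 2) = -(if i = k then 1 else 0) := by
    simp only [Fin.ext_iff]
    rcases lt_trichotomy ((i : ℕ) + 1) ((k : ℕ) + 1) with h | h | h
    · rw [if_neg (by omega)]
      simp only [hcdef]
      rw [Nat.min_eq_left (by omega : (i : ℕ) + 1 ≤ (k : ℕ)),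
        Nat.min_eq_left (by omega : (i : ℕ) + 1 ≤ (k : ℕ) + 1),
        Nat.min_eq_left (by omega : (i : ℕ) + 1 ≤ (k : ℕ) + 2)]
      push_cast
      field_simp
      ring
    · rw [if_pos (by omega)]
      simp only [hcdef]
      rw [Nat.min_eq_right (by omega : (k : ℕ) ≤ (i : ℕ) + 1),
        Nat.min_eq_left (by omega : (i : ℕ) + 1 ≤ (k : ℕ) + 1),
        Nat.min_eq_left (by omega : (i : ℕ) + 1 ≤ (k : ℕ) + 2)]
      have hik : (i : ℕ) = (k : ℕ) := by omega
      rw [hik]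
      push_cast
      field_simp
      ring
    · rw [if_neg (by omega)]
      simp only [hcdef]
      rw [Nat.min_eq_right (by omega : (k : ℕ) ≤ (i : ℕ) + 1),
        Nat.min_eq_right (by omega : (k : ℕ) + 1 ≤ (i : ℕ) + 1),
        Nat.min_eq_right (by omega : (k : ℕ) + 2 ≤ (i : ℕ) + 1)]
      push_cast
      field_simp
      ring
  rw [Matrix.mul_apply, Matrix.neg_apply, Matrix.one_apply,
    Finset.sum_congr rfl (fun j _ => hterm j),
    Finset.sum_add_distrib, Finset.sum_add_distrib, hS1, hS2, hS3, hfin]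
end

section
/- Let n ≥ 2 be a natural number and let α₀, β₀, α₁, β₁ ∈ ℝ with β₀ ≠ 0, β₁ ≠ 0 and D := α₀α₁ + α₀β₁ + β₀α₁ ≠ 0. Define the (n+1)×(n+1) real matrices L and C, indexed by i,j ∈ {0,1,…,n}, by: L_{ij} = n if |i−j| = 1; L_{ii} = −2n for 0 < i < n; L_{00} = −n − α₀/β₀; L_{nn} = −n − α₁/β₁; L_{ij} = 0 otherwise; and C_{ij} = C(i/n, j/n) where C(x,y) = (β₀β₁ + α₀β₁xy + β₀α₁(1−x)(1−y))/D + min(x,y) − xy. Then C·L = −Id, i.e. C = (−L)⁻¹. -/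
set_option maxHeartbeats 1600000 in
/-- The finite element stiffness matrix `L` of `∂ₓ²` with Robin boundary conditions on the
uniform grid with spacing `1/n`, and the matrix `C` of values of the stationary covariance
function `C(x,y) = (β₀β₁ + α₀β₁xy + β₀α₁(1−x)(1−y))/D + min(x,y) − xy` at the grid points,
satisfy `C·L = −Id`, i.e. `C = (−L)⁻¹`.  (Rows and columns are indexed by
`i, j ∈ {0, 1, …, n}`, realised as `Fin (n+1)`.) -/
theorem stmt7 (n : ℕ) (hn : 2 ≤ n) (α₀ β₀ α₁ β₁ D : ℝ)
    (hβ₀ : β₀ ≠ 0) (hβ₁ : β₁ ≠ 0)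
    (hD : D = α₀ * α₁ + α₀ * β₁ + β₀ * α₁) (hD0 : D ≠ 0)
    (L C : Matrix (Fin (n + 1)) (Fin (n + 1)) ℝ)
    (hL : ∀ i j : Fin (n + 1),
      L i j = if (i : ℕ) + 1 = (j : ℕ) ∨ (j : ℕ) + 1 = (i : ℕ) then (n : ℝ)
        else if (i : ℕ) = (j : ℕ) then
          (if (i : ℕ) = 0 then -(n : ℝ) - α₀ / β₀
            else if (i : ℕ) = n then -(n : ℝ) - α₁ / β₁
            else -2 * (n : ℝ))
        else 0)
    (hC : ∀ i j : Fin (n + 1),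
      C i j = (β₀ * β₁ + α₀ * β₁ * (((i : ℕ) : ℝ) / n * (((j : ℕ) : ℝ) / n))
            + β₀ * α₁ * ((1 - ((i : ℕ) : ℝ) / n) * (1 - ((j : ℕ) : ℝ) / n))) / D
          + min (((i : ℕ) : ℝ) / n) (((j : ℕ) : ℝ) / n)
          - ((i : ℕ) : ℝ) / n * (((j : ℕ) : ℝ) / n)) :
    C * L = -1 := by
  subst hD
  have hnpos : 0 < n := by omega
  have hn0 : (0:ℝ) < n := by exact_mod_cast hnpos
  have hnne : (n:ℝ) ≠ 0 := ne_of_gt hn0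
  have hD0' : α₀ * (α₁ + β₁) + β₀ * α₁ ≠ 0 := by rw [mul_add]; exact hD0
  set Cf : ℕ → ℕ → ℝ := fun a b =>
    (β₀ * β₁ + α₀ * β₁ * ((a:ℝ)/n * ((b:ℝ)/n))
      + β₀ * α₁ * ((1 - (a:ℝ)/n) * (1 - (b:ℝ)/n))) / (α₀ * α₁ + α₀ * β₁ + β₀ * α₁)
      + min ((a:ℝ)/n) ((b:ℝ)/n) - (a:ℝ)/n * ((b:ℝ)/n) with hCf
  set Lf : ℕ → ℕ → ℝ := fun a b =>
    if a + 1 = b ∨ b + 1 = a then (n:ℝ)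
    else if a = b then
      (if a = 0 then -(n:ℝ) - α₀/β₀ else if a = n then -(n:ℝ) - α₁/β₁ else -2*(n:ℝ))
    else 0 with hLf
  have hminl : ∀ a b : ℕ, a ≤ b → min ((a:ℝ)/n) ((b:ℝ)/n) = (a:ℝ)/n := by
    intro a b h
    exact min_eq_left (by gcongr <;> exact_mod_cast h)
  have hminr : ∀ a b : ℕ, b ≤ a → min ((a:ℝ)/n) ((b:ℝ)/n) = (b:ℝ)/n := by
    intro a b h
    exact min_eq_right (by gcongr <;> exact_mod_cast h)
  have key : ∀ a b : ℕ, a ≤ n → b ≤ n →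
      ∑ k ∈ Finset.range (n+1), Cf a k * Lf k b = if a = b then -1 else 0 := by
    intro a b ha hb
    rcases Nat.eq_zero_or_pos b with hb0 | hbpos
    · -- b = 0
      subst hb0
      rw [← Finset.sum_subset (show ({0,1} : Finset ℕ) ⊆ Finset.range (n+1) by
            intro x hx; simp only [Finset.mem_insert, Finset.mem_singleton] at hx
            simp only [Finset.mem_range]; omega)
          (fun k hk hk' => by
            simp only [Finset.mem_insert, Finset.mem_singleton, not_or] at hk'
            have h1 : ¬ (k + 1 = 0 ∨ 0 + 1 = k) := by omega
            have h2 : ¬ (k = 0) := by omega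
            simp only [hLf, if_neg h1, if_neg h2, mul_zero])]
      rw [Finset.sum_pair (by norm_num)]
      have hL0 : Lf 0 0 = -(n:ℝ) - α₀/β₀ := by
        simp only [hLf]; norm_num
      have hL1 : Lf 1 0 = (n:ℝ) := by
        simp only [hLf]; norm_num
      rw [hL0, hL1]
      rcases Nat.eq_zero_or_pos a with ha0 | hapos
      · subst ha0
        rw [if_pos rfl]
        simp only [hCf]
        rw [hminl 0 0 le_rfl, hminl 0 1 (by norm_num)]
        push_cast
        field_simp
        ring
      · rw [if_neg (by omega)]
        simp only [hCf]
        rw [hminr a 0 (by omega), hminr a 1 hapos]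
        push_cast
        field_simp
        ring
    · rcases eq_or_lt_of_le hb with hbn | hbn
      · -- b = n
        subst hbn
        rw [← Finset.sum_subset (show ({b-1, b} : Finset ℕ) ⊆ Finset.range (b+1) by
              intro x hx; simp only [Finset.mem_insert, Finset.mem_singleton] at hx
              simp only [Finset.mem_range]; omega)
            (fun k hk hk' => by
              simp only [Finset.mem_insert, Finset.mem_singleton, not_or] at hk'
              simp only [Finset.mem_range] at hk
              have h1 : ¬ (k + 1 = b ∨ b + 1 = k) := by omega
              have h2 : ¬ (k = b) := by omega
              simp only [hLf, if_neg h1, if_neg h2, mul_zero])]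
        rw [Finset.sum_pair (by omega)]
        have hLm : Lf (b-1) b = (b:ℝ) := by
          simp only [hLf]
          split_ifs <;> first | rfl | (exfalso; omega) | (exfalso; tauto)
        have hLb : Lf b b = -(b:ℝ) - α₁/β₁ := by
          simp only [hLf]
          split_ifs <;> first | rfl | (exfalso; omega) | (exfalso; tauto)
        rw [hLm, hLb]
        have hc : ((b-1 : ℕ) : ℝ) = (b:ℝ) - 1 := by
          rw [Nat.cast_sub (by omega), Nat.cast_one]
        rcases eq_or_lt_of_le ha with han | han
        · subst han
          rw [if_pos rfl]
          simp only [hCf]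
          rw [hminr a (a-1) (by omega), hminr a a le_rfl, hc]
          field_simp
          ring
        · rw [if_neg (by omega)]
          simp only [hCf]
          rw [hminl a (b-1) (by omega), hminl a b (by omega), hc]
          field_simp
          ring
      · -- 0 < b < n
        rw [← Finset.sum_subset (show ({b-1, b, b+1} : Finset ℕ) ⊆ Finset.range (n+1) by
              intro x hx
              simp only [Finset.mem_insert, Finset.mem_singleton] at hx
              simp only [Finset.mem_range]; omega)
            (fun k hk hk' => by
              simp only [Finset.mem_insert, Finset.mem_singleton, not_or] at hk'
              have h1 : ¬ (k + 1 = b ∨ b + 1 = k) := by omega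
              have h2 : ¬ (k = b) := by omega
              simp only [hLf, if_neg h1, if_neg h2, mul_zero])]
        rw [Finset.sum_insert (by
              simp only [Finset.mem_insert, Finset.mem_singleton]; omega),
            Finset.sum_pair (by omega)]
        have hLm : Lf (b-1) b = (n:ℝ) := by
          simp only [hLf]
          split_ifs <;> first | rfl | (exfalso; omega) | (exfalso; tauto)
        have hLb : Lf b b = -2*(n:ℝ) := by
          simp only [hLf]
          split_ifs <;> first | rfl | (exfalso; omega) | (exfalso; tauto)
        have hLp : Lf (b+1) b = (n:ℝ) := by
          simp only [hLf]
          split_ifs <;> first | rfl | (exfalso; omega) | (exfalso; tauto)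
        rw [hLm, hLb, hLp]
        have hc : ((b-1 : ℕ) : ℝ) = (b:ℝ) - 1 := by
          rw [Nat.cast_sub (by omega), Nat.cast_one]
        rcases lt_trichotomy a b with hab | hab | hab
        · rw [if_neg (by omega)]
          simp only [hCf]
          rw [hminl a (b-1) (by omega), hminl a b (by omega), hminl a (b+1) (by omega), hc]
          push_cast
          field_simp
          ring
        · subst hab
          rw [if_pos rfl]
          simp only [hCf]
          rw [hminr a (a-1) (by omega), hminl a a le_rfl, hminl a (a+1) (by omega), hc]
          push_cast
          field_simp
          ring
        · rw [if_neg (by omega)]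
          simp only [hCf]
          rw [hminr a (b-1) (by omega), hminr a b (by omega), hminr a (b+1) (by omega), hc]
          push_cast
          field_simp
          ring
  ext i j
  rw [Matrix.mul_apply]
  have step : ∀ k : Fin (n+1), C i k * L k j = Cf (i:ℕ) (k:ℕ) * Lf (k:ℕ) (j:ℕ) := by
    intro k
    rw [hC, hL, hCf, hLf]
  calc ∑ k : Fin (n+1), C i k * L k j
      = ∑ k : Fin (n+1), Cf (i:ℕ) (k:ℕ) * Lf (k:ℕ) (j:ℕ) := Finset.sum_congr rfl (fun k _ => step k)
    _ = ∑ k ∈ Finset.range (n+1), Cf (i:ℕ) k * Lf k (j:ℕ) :=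
        Fin.sum_univ_eq_sum_range (fun k => Cf (i:ℕ) k * Lf k (j:ℕ)) (n+1)
    _ = if (i:ℕ) = (j:ℕ) then -1 else 0 := key (i:ℕ) (j:ℕ) (by omega) (by omega)
    _ = (-1 : Matrix (Fin (n+1)) (Fin (n+1)) ℝ) i j := by
        simp only [Matrix.neg_apply, Matrix.one_apply, Fin.ext_iff]
        split <;> simp_all
end

section
/- Let (Ω, 𝓕, μ) be a measure space and let f₁, f₂ : Ω → ℝ be nonnegative integrable functions with Z₁ = ∫ f₁ dμ > 0 and Z₂ = ∫ f₂ dμ > 0. Then ∫ |f₁/Z₁ − f₂/Z₂| dμ ≤ (2 / max(Z₁, Z₂)) · ∫ |f₁ − f₂| dμ. -/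
open MeasureTheory

private lemma stmt9_aux {Ω : Type*} [MeasurableSpace Ω] (μ : Measure Ω)
    (f₁ f₂ : Ω → ℝ)
    (hf₁ : Integrable f₁ μ) (hf₂ : Integrable f₂ μ)
    (hf₁0 : ∀ ω, 0 ≤ f₁ ω)
    (Z₁ Z₂ : ℝ) (hZ₁ : Z₁ = ∫ ω, f₁ ω ∂μ) (hZ₂ : Z₂ = ∫ ω, f₂ ω ∂μ)
    (hZ₁0 : 0 < Z₁) (hZ₂0 : 0 < Z₂) (hle : Z₁ ≤ Z₂) :
    ∫ ω, |f₁ ω / Z₁ - f₂ ω / Z₂| ∂μ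
      ≤ 2 / Z₂ * ∫ ω, |f₁ ω - f₂ ω| ∂μ := by
  have hZ₁ne := hZ₁0.ne'
  have hZ₂ne := hZ₂0.ne'
  have key : ∀ ω, |f₁ ω / Z₁ - f₂ ω / Z₂|
      ≤ |f₁ ω - f₂ ω| / Z₂ + f₁ ω * ((Z₂ - Z₁) / (Z₁ * Z₂)) := by
    intro ω
    have hEq : f₁ ω / Z₁ - f₂ ω / Z₂
        = (f₁ ω - f₂ ω) / Z₂ + f₁ ω * ((Z₂ - Z₁) / (Z₁ * Z₂)) := by
      field_simp; ring
    rw [hEq]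
    calc |(f₁ ω - f₂ ω) / Z₂ + f₁ ω * ((Z₂ - Z₁) / (Z₁ * Z₂))|
        ≤ |(f₁ ω - f₂ ω) / Z₂| + |f₁ ω * ((Z₂ - Z₁) / (Z₁ * Z₂))| := abs_add_le _ _
      _ = |f₁ ω - f₂ ω| / Z₂ + f₁ ω * ((Z₂ - Z₁) / (Z₁ * Z₂)) := by
          rw [abs_div, abs_of_pos hZ₂0, abs_of_nonneg (mul_nonneg (hf₁0 ω)
            (div_nonneg (sub_nonneg.2 hle) (mul_pos hZ₁0 hZ₂0).le))]
  have hA : Integrable (fun ω => |f₁ ω - f₂ ω| / Z₂) μ := (hf₁.sub hf₂).abs.div_const _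
  have hB : Integrable (fun ω => f₁ ω * ((Z₂ - Z₁) / (Z₁ * Z₂))) μ := hf₁.mul_const _
  have h1 : ∫ ω, |f₁ ω / Z₁ - f₂ ω / Z₂| ∂μ
      ≤ ∫ ω, (|f₁ ω - f₂ ω| / Z₂ + f₁ ω * ((Z₂ - Z₁) / (Z₁ * Z₂))) ∂μ :=
    integral_mono ((hf₁.div_const _).sub (hf₂.div_const _)).abs (hA.add hB) key
  rw [integral_add hA hB, integral_div, integral_mul_const] at h1
  have h2 : Z₂ - Z₁ ≤ ∫ ω, |f₁ ω - f₂ ω| ∂μ := by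
    rw [hZ₁, hZ₂, ← integral_sub hf₂ hf₁]
    apply integral_mono (hf₂.sub hf₁) (hf₁.sub hf₂).abs
    intro ω
    simp only [Pi.sub_apply]
    rw [abs_sub_comm]
    exact le_abs_self _
  have h3 : (∫ ω, f₁ ω ∂μ) * ((Z₂ - Z₁) / (Z₁ * Z₂)) ≤ (∫ ω, |f₁ ω - f₂ ω| ∂μ) / Z₂ := by
    rw [← hZ₁]
    have : Z₁ * ((Z₂ - Z₁) / (Z₁ * Z₂)) = (Z₂ - Z₁) / Z₂ := by field_simp
    rw [this]
    gcongr
  calc ∫ ω, |f₁ ω / Z₁ - f₂ ω / Z₂| ∂μ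
      ≤ (∫ ω, |f₁ ω - f₂ ω| ∂μ) / Z₂ + (∫ ω, |f₁ ω - f₂ ω| ∂μ) / Z₂ := by linarith
    _ = 2 / Z₂ * (∫ ω, |f₁ ω - f₂ ω| ∂μ) := by ring

/-- The L¹-distance between two normalised densities is bounded in terms of the
L¹-distance between the unnormalised densities:
`∫ |f₁/Z₁ − f₂/Z₂| dμ ≤ (2 / max(Z₁,Z₂)) ∫ |f₁ − f₂| dμ`. -/
theorem stmt9 {Ω : Type*} [MeasurableSpace Ω] (μ : Measure Ω)
    (f₁ f₂ : Ω → ℝ)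
    (hf₁ : Integrable f₁ μ) (hf₂ : Integrable f₂ μ)
    (hf₁0 : ∀ ω, 0 ≤ f₁ ω) (hf₂0 : ∀ ω, 0 ≤ f₂ ω)
    (Z₁ Z₂ : ℝ) (hZ₁ : Z₁ = ∫ ω, f₁ ω ∂μ) (hZ₂ : Z₂ = ∫ ω, f₂ ω ∂μ)
    (hZ₁0 : 0 < Z₁) (hZ₂0 : 0 < Z₂) :
    ∫ ω, |f₁ ω / Z₁ - f₂ ω / Z₂| ∂μ
      ≤ 2 / max Z₁ Z₂ * ∫ ω, |f₁ ω - f₂ ω| ∂μ := by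
  rcases le_total Z₁ Z₂ with h | h
  · rw [max_eq_right h]
    exact stmt9_aux μ f₁ f₂ hf₁ hf₂ hf₁0 Z₁ Z₂ hZ₁ hZ₂ hZ₁0 hZ₂0 h
  · rw [max_eq_left h]
    have := stmt9_aux μ f₂ f₁ hf₂ hf₁ hf₂0 Z₂ Z₁ hZ₂ hZ₁ hZ₂0 hZ₁0 h
    simpa [abs_sub_comm] using this
end

section
/- Let (Ω, 𝓕) and (E, 𝓔) be measurable spaces, let Π : Ω → E be measurable, and let μ and ν be probability measures on Ω with μ absolutely continuous with respect to ν. Then the pushforward μ∘Π⁻¹ is absolutely continuous with respect to ν∘Π⁻¹, and ν-almost everywhere (d(μ∘Π⁻¹)/d(ν∘Π⁻¹)) ∘ Π = E_ν( dμ/dν | σ(Π) ), the conditional expectation under ν of the Radon–Nikodym density dμ/dν given the σ-algebra generated by Π. -/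
open MeasureTheory

/-- If `μ ≪ ν` are probability measures on `Ω` and `proj : Ω → E` is measurable, then the
pushforward `μ∘proj⁻¹` is absolutely continuous with respect to `ν∘proj⁻¹`, and
`ν`-almost everywhere the composition of the Radon–Nikodym density of the pushforwards
with `proj` equals the conditional expectation under `ν` of `dμ/dν` given the σ-algebra
generated by `proj`. -/
theorem stmt10 {Ω E : Type*} [MeasurableSpace Ω] [mE : MeasurableSpace E]
    (proj : Ω → E) (hproj : Measurable proj)
    (μ ν : Measure Ω) [IsProbabilityMeasure μ] [IsProbabilityMeasure ν]
    (hμν : μ ≪ ν) :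
    μ.map proj ≪ ν.map proj
    ∧ (fun ω => ((μ.map proj).rnDeriv (ν.map proj) (proj ω)).toReal)
        =ᵐ[ν] ν[fun ω => (μ.rnDeriv ν ω).toReal | MeasurableSpace.comap proj mE] := by
  have hmap : μ.map proj ≪ ν.map proj := hμν.map hproj
  have := Measure.isProbabilityMeasure_map (μ := μ) hproj.aemeasurable
  have := Measure.isProbabilityMeasure_map (μ := ν) hproj.aemeasurable
  refine ⟨hmap, ?_⟩
  have hm : MeasurableSpace.comap proj mE ≤ ‹MeasurableSpace Ω› := hproj.comap_le
  have hfm : Measurable (fun e => ((μ.map proj).rnDeriv (ν.map proj) e).toReal) :=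
    ((μ.map proj).measurable_rnDeriv (ν.map proj)).ennreal_toReal
  refine ae_eq_condExp_of_forall_setIntegral_eq hm
    (Measure.integrable_toReal_rnDeriv) ?_ ?_ ?_
  · intro s _ _
    refine Integrable.integrableOn ?_
    rw [show (fun ω => ((μ.map proj).rnDeriv (ν.map proj) (proj ω)).toReal) = (fun e => ((μ.map proj).rnDeriv (ν.map proj) e).toReal) ∘ proj from rfl, ← integrable_map_measure hfm.aestronglyMeasurable hproj.aemeasurable]
    exact Measure.integrable_toReal_rnDeriv
  · rintro s ⟨A, hA, rfl⟩ _
    rw [← setIntegral_map hA hfm.aestronglyMeasurable hproj.aemeasurable,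
      Measure.setIntegral_toReal_rnDeriv hmap A,
      Measure.setIntegral_toReal_rnDeriv hμν (proj ⁻¹' A),
      map_measureReal_apply hproj hA]
  · exact StronglyMeasurable.aestronglyMeasurable
      (Measurable.stronglyMeasurable (hfm.comp (Measurable.of_comap_le le_rfl)))
end

section
/- Let (E, 𝓔) and (F, 𝓕) be measurable spaces, let κ be a Markov kernel from E to F, and let Π : F → E be measurable such that κ(x)({y ∈ F : Π(y) = x}) = 1 for every x ∈ E. Let μ and ν be probability measures on E with μ ≪ ν and density ψ = dμ/dν. Let μ̂ = ∫_E κ(x) dμ(x) and ν̂ = ∫_E κ(x) dν(x) be the corresponding mixture measures on F. Then μ̂ ≪ ν̂ and dμ̂/dν̂ = ψ∘Π holds ν̂-almost everywhere. -/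
open MeasureTheory ProbabilityTheory

/-- Let `κ` be a Markov kernel from `E` to `F` and `proj : F → E` a measurable map such
that `κ x` is concentrated on the fibre `{y : proj y = x}` for every `x`.  If `μ ≪ ν`
are probability measures on `E`, then the mixture measures `μ̂ = ∫ κ(x) dμ(x)` and
`ν̂ = ∫ κ(x) dν(x)` satisfy `μ̂ ≪ ν̂` and `dμ̂/dν̂ = (dμ/dν)∘proj` holds
`ν̂`-almost everywhere. -/
theorem stmt16 {E F : Type*} [MeasurableSpace E] [MeasurableSpace F]
    (κ : Kernel E F) [IsMarkovKernel κ]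
    (proj : F → E) (hproj : Measurable proj)
    (hκ : ∀ x : E, κ x {y : F | proj y = x} = 1)
    (μ ν : Measure E) [IsProbabilityMeasure μ] [IsProbabilityMeasure ν]
    (hμν : μ ≪ ν) :
    μ.bind κ ≪ ν.bind κ
    ∧ (μ.bind κ).rnDeriv (ν.bind κ)
        =ᵐ[ν.bind κ] fun y => μ.rnDeriv ν (proj y) := by
  have hψ : Measurable (μ.rnDeriv ν) := Measure.measurable_rnDeriv μ ν
  have hg : Measurable fun y => μ.rnDeriv ν (proj y) := hψ.comp hproj
  -- a.e. w.r.t. κ x, the composed density equals its value at x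
  have hae : ∀ x : E, ∀ᵐ y ∂(κ x), μ.rnDeriv ν (proj y) = μ.rnDeriv ν x := by
    intro x
    have hsub : {y : F | proj y = x} ⊆ {y : F | μ.rnDeriv ν (proj y) = μ.rnDeriv ν x} :=
      fun y hy => by simp [Set.mem_setOf_eq] at hy ⊢; rw [hy]
    have hmeas : MeasurableSet {y : F | μ.rnDeriv ν (proj y) = μ.rnDeriv ν x} :=
      hg (measurableSet_singleton _)
    have h1 : κ x {y : F | μ.rnDeriv ν (proj y) = μ.rnDeriv ν x} = 1 :=
      le_antisymm (prob_le_one) (le_trans (hκ x).ge (measure_mono hsub))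
    rw [ae_iff]
    have := prob_compl_eq_zero_iff (μ := κ x) hmeas
    exact this.2 h1
  have key : μ.bind κ = (ν.bind κ).withDensity fun y => μ.rnDeriv ν (proj y) := by
    ext A hA
    rw [Measure.bind_apply hA κ.measurable.aemeasurable, withDensity_apply _ hA,
      ← lintegral_indicator hA,
      Measure.lintegral_bind κ.measurable.aemeasurable (hg.indicator hA).aemeasurable]
    conv_lhs => rw [← Measure.withDensity_rnDeriv_eq μ ν hμν]
    rw [lintegral_withDensity_eq_lintegral_mul _ hψ (κ.measurable_coe hA)]
    refine lintegral_congr fun x => ?_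
    have : ∫⁻ y, A.indicator (fun y => μ.rnDeriv ν (proj y)) y ∂(κ x)
        = ∫⁻ y, A.indicator (fun _ => μ.rnDeriv ν x) y ∂(κ x) := by
      refine lintegral_congr_ae ?_
      filter_upwards [hae x] with y hy
      by_cases hyA : y ∈ A <;> simp [hyA, hy]
    rw [this, lintegral_indicator_const hA]
    rfl
  have hprob : IsProbabilityMeasure (ν.bind κ) := by
    constructor
    rw [Measure.bind_apply MeasurableSet.univ κ.measurable.aemeasurable]
    simp
  exact key ▸ ⟨withDensity_absolutelyContinuous _ _,
    Measure.rnDeriv_withDensity (ν.bind κ) hg⟩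
end
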